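/- The number of maximal chains of a finite poset with d elements is at most ⌊3^(d/3)⌋. -/

import Mathlib

open Finset
open scoped Classical

def MaxChain {α : Type*} [PartialOrder α] (C : Finset α) : Prop :=
  IsChain (· ≤ ·) (C : Set α) ∧ ∀ C' : Finset α, IsChain (· ≤ ·) (C' : Set α) → C ⊆ C' → C = C'

-- subtype chain image is a maximal chain of the subtype
lemma maxchain_subtype {α : Type*} [PartialOrder α] (x : α) (C : Finset α)
    (hC : MaxChain C) (hx : x ∈ C) (hmin : ∀ y ∈ C, x ≤ y) :
    MaxChain (C.subtype (fun y => x < y)) := by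
  classical
  constructor
  · rintro ⟨a, ha⟩ haC ⟨b, hb⟩ hbC hne
    have haC' : a ∈ C := by simpa using haC
    have hbC' : b ∈ C := by simpa using hbC
    have : a ≠ b := fun h => hne (by simpa using h)
    exact hC.1 haC' hbC' this
  · intro D hD hsub
    set emb := Function.Embedding.subtype (fun y => x < y)
    set D' : Finset α := insert x (D.map emb) with hD'def
    have hchain : IsChain (· ≤ ·) (D' : Set α) := by
      rw [hD'def, coe_insert]
      refine IsChain.insert ?_ ?_
      · rintro a ha b hb hne
        simp only [Finset.coe_map, Set.mem_image, mem_coe] at ha hb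
        obtain ⟨a', ha', rfl⟩ := ha
        obtain ⟨b', hb', rfl⟩ := hb
        have : a' ≠ b' := fun h => hne (by rw [h])
        exact hD ha' hb' this
      · rintro b hb -
        simp only [Finset.coe_map, Set.mem_image, mem_coe] at hb
        obtain ⟨b', -, rfl⟩ := hb
        exact Or.inl b'.2.le
    have hCD' : C ⊆ D' := by
      intro y hy
      rcases eq_or_ne y x with rfl | hne
      · exact mem_insert_self _ _
      · have hxy : x < y := lt_of_le_of_ne (hmin y hy) (Ne.symm hne)
        have : (⟨y, hxy⟩ : {z // x < z}) ∈ D := hsub (Finset.mem_subtype.mpr hy)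
        exact mem_insert_of_mem (mem_map_of_mem _ this)
    have hCeq : C = D' := hC.2 D' hchain hCD'
    ext ⟨y, hy⟩
    simp only [Finset.mem_subtype, hCeq, hD'def, mem_insert, mem_map]
    constructor
    · rintro (rfl | ⟨b, hb, heq⟩)
      · exact absurd hy (lt_irrefl _)
      · have : b = ⟨y, hy⟩ := Subtype.ext (by simpa [emb] using heq)
        rwa [← this]
    · intro hyD
      exact Or.inr ⟨⟨y, hy⟩, hyD, rfl⟩

-- recover C from its subtype image
lemma recover {α : Type*} [PartialOrder α] [DecidableEq α] (x : α) (C : Finset α)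
    (hx : x ∈ C) (hmin : ∀ y ∈ C, x ≤ y) :
    C = insert x ((C.subtype (fun y => x < y)).map (Function.Embedding.subtype _)) := by
  ext y
  simp only [mem_insert, mem_map, Finset.mem_subtype, Function.Embedding.coe_subtype]
  constructor
  · intro hy
    rcases eq_or_ne y x with rfl | hne
    · exact Or.inl rfl
    · exact Or.inr ⟨⟨y, lt_of_le_of_ne (hmin y hy) (Ne.symm hne)⟩, by simpa using hy, rfl⟩
  · rintro (rfl | ⟨⟨b, hb⟩, hbC, rfl⟩)
    · exact hx
    · simpa using hbC


lemma cube_le (a p : ℕ) (h : (a:ℝ)^(3:ℕ) ≤ 3^p) : (a:ℝ) ≤ 3 ^ ((p:ℝ)/3) := by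
  have h3 : (0:ℝ) ≤ 3 ^ ((p:ℝ)/3) := (Real.rpow_pos_of_pos (by norm_num) _).le
  have key : ((3:ℝ) ^ ((p:ℝ)/3))^(3:ℕ) = 3^p := by
    rw [← Real.rpow_natCast ((3:ℝ) ^ ((p:ℝ)/3)) 3, ← Real.rpow_mul (by norm_num)]
    norm_num
  exact (pow_le_pow_iff_left₀ (by positivity : (0:ℝ) ≤ (a:ℝ)) h3 (by norm_num : (3:ℕ) ≠ 0)).mp
    (by rw [key]; exact h)

lemma nat_le_rpow (m : ℕ) : (m:ℝ) ≤ 3 ^ ((m:ℝ)/3) := by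
  induction m using Nat.strong_induction_on with
  | _ m ih =>
    match m, ih with
    | 0, _ =>
      simpa using (Real.rpow_pos_of_pos (by norm_num : (0:ℝ)<3) _).le
    | 1, _ => exact cube_le 1 1 (by norm_num)
    | 2, _ => exact cube_le 2 2 (by norm_num)
    | 3, _ => exact cube_le 3 3 (by norm_num)
    | 4, _ => exact cube_le 4 4 (by norm_num)
    | (k+5), ih =>
      have hk := ih (k+2) (by omega)
      have : ((k+5:ℕ):ℝ)/3 = ((k+2:ℕ):ℝ)/3 + 1 := by push_cast; ring
      rw [this, Real.rpow_add (by norm_num), Real.rpow_one]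
      push_cast at hk ⊢
      nlinarith [hk]


lemma exists_min {α : Type*} [PartialOrder α] [Nonempty α] {C : Finset α}
    (hC : MaxChain C) : ∃ x ∈ C, IsMin x ∧ ∀ y ∈ C, x ≤ y := by
  have hne : C.Nonempty := by
    rcases C.eq_empty_or_nonempty with rfl | h
    · obtain ⟨a⟩ := ‹Nonempty α›
      have := hC.2 {a} (by rw [coe_singleton]; exact Set.subsingleton_singleton.isChain) (empty_subset _)
      exact absurd this.symm (singleton_ne_empty a)
    · exact h
  obtain ⟨c, hcC, hcmin⟩ := C.exists_minimal hne
  have hle : ∀ y ∈ C, c ≤ y := by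
    intro y hy
    rcases eq_or_ne y c with rfl | hne'
    · exact le_refl _
    · rcases hC.1 hy hcC hne' with h | h
      · exact absurd (lt_of_le_of_ne h hne') (fun hlt => lt_irrefl c (lt_of_le_of_lt (hcmin hy h) hlt))
      · exact h
  refine ⟨c, hcC, ?_, hle⟩
  intro z hz
  by_contra hzc
  have hzc' : z < c := lt_of_le_of_ne hz (fun h => hzc (h ▸ le_refl _))
  have hchain : IsChain (· ≤ ·) ((insert z C : Finset α) : Set α) := by
    rw [coe_insert]
    refine hC.1.insert (fun b hb _ => Or.inl (hzc'.le.trans (hle b hb)))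
  have := hC.2 _ hchain (subset_insert _ _)
  have hzC : z ∈ C := this ▸ mem_insert_self z C
  exact lt_irrefl c (lt_of_le_of_lt (hle z hzC) hzc')


lemma key : ∀ (d : ℕ) (α : Type u) [Fintype α] [PartialOrder α], Fintype.card α = d →
    (((Finset.univ.filter (fun C : Finset α => MaxChain C)).card : ℝ)) ≤ 3 ^ ((d:ℝ)/3) := by
  intro d
  induction d using Nat.strong_induction_on with
  | _ d ih =>
    intro α _ _ hd
    rcases Nat.eq_zero_or_pos d with rfl | hdpos
    · haveI : IsEmpty α := Fintype.card_eq_zero_iff.mp hd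
      have hsub : (Finset.univ.filter (fun C : Finset α => MaxChain C)) ⊆ {∅} := by
        intro C _
        simp [eq_empty_of_isEmpty C]
      calc ((Finset.univ.filter (fun C : Finset α => MaxChain C)).card : ℝ)
          ≤ (({∅} : Finset (Finset α)).card : ℝ) := by exact_mod_cast card_le_card hsub
        _ = 1 := by simp
        _ ≤ 3 ^ (((0:ℕ):ℝ)/3) := by norm_num
    · haveI : Nonempty α := Fintype.card_pos_iff.mp (hd ▸ hdpos)
      set S := Finset.univ.filter (fun C : Finset α => MaxChain C) with hS
      set M := Finset.univ.filter (fun x : α => IsMin x) with hMdef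
      set m := M.card with hm
      have hMne : M.Nonempty := by
        obtain ⟨x, -, hxmin⟩ := Finset.exists_minimal (s := (univ : Finset α)) univ_nonempty
        refine ⟨x, ?_⟩
        simp only [hMdef, mem_filter, mem_univ, true_and]
        intro z hz
        by_contra hne
        exact hne (hxmin (mem_univ z) hz)
      have hm1 : 1 ≤ m := card_pos.mpr hMne
      have hmd : m ≤ d := by
        calc m ≤ Finset.univ.card := card_le_card (subset_univ M)
          _ = d := by rw [card_univ, hd]
      have hcov : S ⊆ M.biUnion (fun x => S.filter (fun C => x ∈ C ∧ ∀ y ∈ C, x ≤ y)) := by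
        intro C hCmem
        have hC : MaxChain C := (mem_filter.mp hCmem).2
        obtain ⟨x, hxC, hxmin, hxle⟩ := exists_min hC
        exact mem_biUnion.mpr ⟨x, by simp [hMdef, hxmin], mem_filter.mpr ⟨hCmem, hxC, hxle⟩⟩
      have hper : ∀ x ∈ M,
          ((S.filter (fun C => x ∈ C ∧ ∀ y ∈ C, x ≤ y)).card : ℝ) ≤ 3 ^ (((d - m : ℕ):ℝ)/3) := by
        intro x hxM
        set Ux := {y : α // x < y} with hUx
        have hcardU : Fintype.card Ux ≤ d - m := by
          rw [Fintype.card_subtype]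
          have hsub : Finset.univ.filter (fun y => x < y) ⊆ Finset.univ \ M := by
            intro y hy
            have hxy : x < y := (mem_filter.mp hy).2
            rw [mem_sdiff]
            refine ⟨mem_univ y, ?_⟩
            simp only [hMdef, mem_filter, mem_univ, true_and]
            intro hymin
            exact lt_irrefl x (lt_of_lt_of_le hxy (hymin (le_of_lt hxy)))
          calc (Finset.univ.filter (fun y => x < y)).card ≤ (Finset.univ \ M).card :=
                card_le_card hsub
            _ = d - m := by rw [card_sdiff_of_subset (subset_univ M), card_univ, hd]
        have hlt : Fintype.card Ux < d := lt_of_le_of_lt hcardU (by omega)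
        have hih := ih (Fintype.card Ux) hlt Ux rfl
        have hinj : ((S.filter (fun C => x ∈ C ∧ ∀ y ∈ C, x ≤ y)).card : ℝ)
            ≤ ((Finset.univ.filter (fun C : Finset Ux => MaxChain C)).card : ℝ) := by
          have hcc := Finset.card_le_card_of_injOn
            (f := fun C : Finset α => C.subtype (fun y => x < y))
            (s := S.filter (fun C => x ∈ C ∧ ∀ y ∈ C, x ≤ y))
            (t := Finset.univ.filter (fun C : Finset Ux => MaxChain C))
            ?_ ?_
          · exact_mod_cast hcc
          · intro C hC
            simp only [mem_coe, mem_filter, hS, mem_univ, true_and] at hC ⊢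
            exact maxchain_subtype x C hC.1 hC.2.1 hC.2.2
          · intro C hC C' hC' heq
            simp only [coe_filter, Set.mem_setOf_eq, mem_filter, hS, mem_univ, true_and] at hC hC'
            have heq' : C.subtype (fun y => x < y) = C'.subtype (fun y => x < y) := heq
            rw [recover x C hC.2.1 hC.2.2, recover x C' hC'.2.1 hC'.2.2, heq']
        have hmono : ((Fintype.card Ux : ℝ))/3 ≤ ((d - m : ℕ):ℝ)/3 := by
          have : ((Fintype.card Ux : ℝ)) ≤ ((d - m : ℕ):ℝ) := by exact_mod_cast hcardU
          linarith
        exact hinj.trans (hih.trans (Real.rpow_le_rpow_of_exponent_le (by norm_num) hmono))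
      have h1 : (S.card : ℝ) ≤ ∑ x ∈ M, ((S.filter (fun C => x ∈ C ∧ ∀ y ∈ C, x ≤ y)).card : ℝ) := by
        exact_mod_cast (card_le_card hcov).trans card_biUnion_le
      have h2 := Finset.sum_le_sum hper
      have h3 : ∑ _x ∈ M, (3:ℝ) ^ (((d - m : ℕ):ℝ)/3) = (m:ℝ) * 3 ^ (((d - m : ℕ):ℝ)/3) := by
        rw [Finset.sum_const, nsmul_eq_mul]
      have h4 : (m:ℝ) * 3 ^ (((d - m : ℕ):ℝ)/3) ≤ 3 ^ ((m:ℝ)/3) * 3 ^ (((d - m : ℕ):ℝ)/3) :=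
        mul_le_mul_of_nonneg_right (nat_le_rpow m) (Real.rpow_pos_of_pos (by norm_num) _).le
      have h5 : (3:ℝ) ^ ((m:ℝ)/3) * 3 ^ (((d - m : ℕ):ℝ)/3) = 3 ^ ((d:ℝ)/3) := by
        rw [← Real.rpow_add (by norm_num)]
        congr 1
        rw [Nat.cast_sub hmd]
        ring
      calc (S.card : ℝ) ≤ _ := h1
        _ ≤ _ := h2
        _ = _ := h3
        _ ≤ _ := h4
        _ = _ := h5

/-- The number of maximal chains of a finite poset with `d` elements is at most `⌊3^(d/3)⌋`. -/
theorem stmt_0 {α : Type*} [Fintype α] [PartialOrder α] :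
    {C : Finset α | IsChain (· ≤ ·) (C : Set α) ∧
        ∀ C' : Finset α, IsChain (· ≤ ·) (C' : Set α) → C ⊆ C' → C = C'}.ncard
      ≤ ⌊(3 : ℝ) ^ ((Fintype.card α : ℝ) / 3)⌋₊ := by
  have h := key (Fintype.card α) α rfl
  have hset : {C : Finset α | IsChain (· ≤ ·) (C : Set α) ∧
        ∀ C' : Finset α, IsChain (· ≤ ·) (C' : Set α) → C ⊆ C' → C = C'}
      = ↑(Finset.univ.filter (fun C : Finset α => MaxChain C)) := by
    ext C
    simp only [coe_filter, Set.mem_setOf_eq, mem_coe, mem_univ, true_and]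
    exact Iff.rfl
  rw [hset, Set.ncard_coe_finset]
  exact Nat.le_floor h
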